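/- Let $(R,\xi)$ be a pre-bialgebra with cocycle in ${}^H_H\mathcal{YD}$ and $A = R\#_\xi H$ the associated bialgebra, with $\sigma(h) = 1_R \# h$. Let $\phi : A \otimes A \to K$ be $H$-bilinear and $H$-balanced. Then for all $r,s,t \in R$ and $h \in H$: (a) $\phi(r\#1 \otimes (s\#1)(t\#1)) = \phi(r\#1 \otimes st\#1)$; (b) $\phi(r\#h \otimes s\#1) = \phi(r\#1 \otimes (h\cdot s)\#1)$; (c) $\phi((h\cdot r)\#1 \otimes s\#1) = \phi(r\#1 \otimes (S(h)\cdot s)\#1)$. -/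
import Mathlib


set_option maxHeartbeats 1000000
open TensorProduct

section Defs

variable {K H R : Type*} [CommRing K] [Ring H] [HopfAlgebra K H]
  [AddCommGroup R] [Module K R] [Coalgebra K R]

/-- The Yetter-Drinfeld braiding `c(v ⊗ w) = v₍₋₁₎ · w ⊗ v₍₀₎` on `R ⊗ R`. -/
noncomputable def braidRR (act : (H ⊗[K] R) →ₗ[K] R) (ρ : R →ₗ[K] H ⊗[K] R) :
    (R ⊗[K] R) →ₗ[K] R ⊗[K] R :=
  (TensorProduct.map act LinearMap.id) ∘ₗ
  (TensorProduct.assoc K H R R).symm.toLinearMap ∘ₗ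
  (TensorProduct.map LinearMap.id (TensorProduct.comm K R R).toLinearMap) ∘ₗ
  (TensorProduct.assoc K H R R).toLinearMap ∘ₗ
  (TensorProduct.map ρ LinearMap.id)

/-- Apply `f : R ⊗ R → R ⊗ R` to the middle tensorands of `(R ⊗ R) ⊗ (R ⊗ R)`. -/
noncomputable def midMap (f : (R ⊗[K] R) →ₗ[K] R ⊗[K] R) :
    ((R ⊗[K] R) ⊗[K] (R ⊗[K] R)) →ₗ[K] (R ⊗[K] R) ⊗[K] (R ⊗[K] R) :=
  (TensorProduct.assoc K R R (R ⊗[K] R)).symm.toLinearMap ∘ₗ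
  (TensorProduct.map LinearMap.id (TensorProduct.assoc K R R R).toLinearMap) ∘ₗ
  (TensorProduct.map LinearMap.id (TensorProduct.map f LinearMap.id)) ∘ₗ
  (TensorProduct.map LinearMap.id (TensorProduct.assoc K R R R).symm.toLinearMap) ∘ₗ
  (TensorProduct.assoc K R R (R ⊗[K] R)).toLinearMap

/-- The comultiplication `Δ_{R⊗R} = (id ⊗ c ⊗ id)(Δ_R ⊗ Δ_R)` of the coalgebra
`R ⊗ R` in `{}^H_H 𝒴𝒟`. -/
noncomputable def comulRR (act : (H ⊗[K] R) →ₗ[K] R) (ρ : R →ₗ[K] H ⊗[K] R) :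
    (R ⊗[K] R) →ₗ[K] (R ⊗[K] R) ⊗[K] (R ⊗[K] R) :=
  midMap (braidRR act ρ) ∘ₗ (TensorProduct.map Coalgebra.comul Coalgebra.comul)

/-- The diagonal action `h · (r ⊗ s) = h₁·r ⊗ h₂·s` of `H` on `R ⊗ R`. -/
noncomputable def actRR (act : (H ⊗[K] R) →ₗ[K] R) :
    (H ⊗[K] (R ⊗[K] R)) →ₗ[K] R ⊗[K] R :=
  (TensorProduct.map act act) ∘ₗ
  (TensorProduct.tensorTensorTensorComm K H H R R).toLinearMap ∘ₗ
  (TensorProduct.map Coalgebra.comul LinearMap.id)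

/-- The diagonal coaction `ρ(r ⊗ s) = r₍₋₁₎s₍₋₁₎ ⊗ (r₍₀₎ ⊗ s₍₀₎)` of `H` on `R ⊗ R`. -/
noncomputable def coactRR (ρ : R →ₗ[K] H ⊗[K] R) :
    (R ⊗[K] R) →ₗ[K] H ⊗[K] (R ⊗[K] R) :=
  (TensorProduct.map (LinearMap.mul' K H) LinearMap.id) ∘ₗ
  (TensorProduct.tensorTensorTensorComm K H R H R).toLinearMap ∘ₗ
  (TensorProduct.map ρ ρ)

/-- The braiding-type map `c_{H,R}(h ⊗ s) = h₁·s ⊗ h₂`. -/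
noncomputable def cHR (act : (H ⊗[K] R) →ₗ[K] R) : (H ⊗[K] R) →ₗ[K] R ⊗[K] H :=
  (TensorProduct.comm K H R).toLinearMap ∘ₗ
  (TensorProduct.map LinearMap.id act) ∘ₗ
  (TensorProduct.assoc K H H R).toLinearMap ∘ₗ
  (TensorProduct.map (TensorProduct.comm K H H).toLinearMap LinearMap.id) ∘ₗ
  (TensorProduct.map Coalgebra.comul LinearMap.id)

/-- The left adjoint action `h ⇀ x = h₁ x S(h₂)` of `H` on itself. -/
noncomputable def adjH : (H ⊗[K] H) →ₗ[K] H :=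
  (LinearMap.mul' K H) ∘ₗ
  (TensorProduct.map LinearMap.id (LinearMap.mul' K H)) ∘ₗ
  (TensorProduct.map LinearMap.id (TensorProduct.comm K H H).toLinearMap) ∘ₗ
  (TensorProduct.assoc K H H H).toLinearMap ∘ₗ
  (TensorProduct.map (TensorProduct.map LinearMap.id (HopfAlgebra.antipode (R := K)))
    LinearMap.id) ∘ₗ
  (TensorProduct.map Coalgebra.comul LinearMap.id)

/-- The braiding `c_{R,H}(r ⊗ h) = (r₍₋₁₎ ⇀ h) ⊗ r₍₀₎`, where `H` carries the
adjoint action. -/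
noncomputable def cRH (ρ : R →ₗ[K] H ⊗[K] R) : (R ⊗[K] H) →ₗ[K] H ⊗[K] R :=
  (TensorProduct.map adjH LinearMap.id) ∘ₗ
  (TensorProduct.assoc K H H R).symm.toLinearMap ∘ₗ
  (TensorProduct.map LinearMap.id (TensorProduct.comm K R H).toLinearMap) ∘ₗ
  (TensorProduct.assoc K H R H).toLinearMap ∘ₗ
  (TensorProduct.map ρ LinearMap.id)

/-- `Φ(ξ)` on `(R ⊗ R) ⊗ H`: `z ⊗ h ↦ z₁ ⊗ ξ(z₂)h`. -/
noncomputable def PhiXiH (act : (H ⊗[K] R) →ₗ[K] R) (ρ : R →ₗ[K] H ⊗[K] R)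
    (ξ : (R ⊗[K] R) →ₗ[K] H) : ((R ⊗[K] R) ⊗[K] H) →ₗ[K] (R ⊗[K] R) ⊗[K] H :=
  (TensorProduct.map LinearMap.id (LinearMap.mul' K H)) ∘ₗ
  (TensorProduct.map LinearMap.id (TensorProduct.map ξ LinearMap.id)) ∘ₗ
  (TensorProduct.assoc K (R ⊗[K] R) (R ⊗[K] R) H).toLinearMap ∘ₗ
  (TensorProduct.map (comulRR act ρ) LinearMap.id)

/-- `Φ(ξ)` on `(R ⊗ R) ⊗ R`: `z ⊗ t ↦ z₁ ⊗ ξ(z₂)·t`. -/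
noncomputable def PhiXiR (act : (H ⊗[K] R) →ₗ[K] R) (ρ : R →ₗ[K] H ⊗[K] R)
    (ξ : (R ⊗[K] R) →ₗ[K] H) : ((R ⊗[K] R) ⊗[K] R) →ₗ[K] (R ⊗[K] R) ⊗[K] R :=
  (TensorProduct.map LinearMap.id act) ∘ₗ
  (TensorProduct.map LinearMap.id (TensorProduct.map ξ LinearMap.id)) ∘ₗ
  (TensorProduct.assoc K (R ⊗[K] R) (R ⊗[K] R) R).toLinearMap ∘ₗ
  (TensorProduct.map (comulRR act ρ) LinearMap.id)

/-- The multiplication of the smash product `A = R #_ξ H`. -/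
noncomputable def mulA (act : (H ⊗[K] R) →ₗ[K] R) (ρ : R →ₗ[K] H ⊗[K] R)
    (mR : (R ⊗[K] R) →ₗ[K] R) (ξ : (R ⊗[K] R) →ₗ[K] H) :
    ((R ⊗[K] H) ⊗[K] (R ⊗[K] H)) →ₗ[K] R ⊗[K] H :=
  (TensorProduct.map mR (LinearMap.mul' K H)) ∘ₗ
  (TensorProduct.assoc K (R ⊗[K] R) H H).toLinearMap ∘ₗ
  (TensorProduct.map (PhiXiH act ρ ξ) LinearMap.id) ∘ₗ
  (TensorProduct.map (TensorProduct.assoc K R R H).symm.toLinearMap LinearMap.id) ∘ₗ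
  (TensorProduct.map (TensorProduct.map LinearMap.id (cHR act)) LinearMap.id) ∘ₗ
  (TensorProduct.map (TensorProduct.assoc K R H R).toLinearMap LinearMap.id) ∘ₗ
  (TensorProduct.assoc K (R ⊗[K] H) R H).symm.toLinearMap

/-- The smash coproduct `Δ_A(r # h) = r¹ # r²₍₋₁₎h₁ ⊗ r²₍₀₎ # h₂` of `A = R #_ξ H`. -/
noncomputable def comulA (ρ : R →ₗ[K] H ⊗[K] R) :
    (R ⊗[K] H) →ₗ[K] (R ⊗[K] H) ⊗[K] (R ⊗[K] H) :=
  (TensorProduct.assoc K R H (R ⊗[K] H)).symm.toLinearMap ∘ₗ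
  (TensorProduct.map LinearMap.id
    ((TensorProduct.map (LinearMap.mul' K H) LinearMap.id) ∘ₗ
      (TensorProduct.tensorTensorTensorComm K H R H H).toLinearMap)) ∘ₗ
  (TensorProduct.assoc K R (H ⊗[K] R) (H ⊗[K] H)).toLinearMap ∘ₗ
  (TensorProduct.map (TensorProduct.map LinearMap.id ρ) LinearMap.id) ∘ₗ
  (TensorProduct.map Coalgebra.comul Coalgebra.comul)

/-- The canonical injection `σ : H → R #_ξ H`, `σ(h) = 1_R # h`. -/
noncomputable def sigmaA (one : R) : H →ₗ[K] R ⊗[K] H := TensorProduct.mk K R H one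

/-- A pre-bialgebra with cocycle `(R, ξ)` in `{}^H_H 𝒴𝒟` (Ardizzoni–Menini–Ştefan). -/
structure PreBialgebraWithCocycle (K H R : Type*) [CommRing K] [Ring H]
    [HopfAlgebra K H] [AddCommGroup R] [Module K R] [Coalgebra K R] where
  /-- the left `H`-action on `R` -/
  act : (H ⊗[K] R) →ₗ[K] R
  /-- the left `H`-coaction on `R` -/
  ρ : R →ₗ[K] H ⊗[K] R
  /-- the coaugmentation `1_R` -/
  one : R
  /-- the multiplication of `R` -/
  mR : (R ⊗[K] R) →ₗ[K] R
  /-- the cocycle `ξ : R ⊗ R → H` -/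
  ξ : (R ⊗[K] R) →ₗ[K] H
  act_one : ∀ z : R, act ((1 : H) ⊗ₜ[K] z) = z
  act_mul : ∀ (g h : H) (z : R), act ((g * h) ⊗ₜ[K] z) = act (g ⊗ₜ[K] act (h ⊗ₜ[K] z))
  coact_counit : (TensorProduct.lid K R).toLinearMap ∘ₗ
    (TensorProduct.map Coalgebra.counit LinearMap.id) ∘ₗ ρ = LinearMap.id
  coact_coassoc : (TensorProduct.map Coalgebra.comul LinearMap.id) ∘ₗ ρ =
    (TensorProduct.assoc K H H R).symm.toLinearMap ∘ₗ
      (TensorProduct.map LinearMap.id ρ) ∘ₗ ρ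
  /-- the Yetter-Drinfeld compatibility, in the equivalent form
  `h₁ z₍₋₁₎ ⊗ h₂ · z₍₀₎ = (h₁ · z)₍₋₁₎ h₂ ⊗ (h₁ · z)₍₀₎` -/
  yd : (TensorProduct.map (LinearMap.mul' K H) act) ∘ₗ
      (TensorProduct.tensorTensorTensorComm K H H H R).toLinearMap ∘ₗ
      (TensorProduct.map Coalgebra.comul ρ) =
    (TensorProduct.map ((LinearMap.mul' K H) ∘ₗ (TensorProduct.comm K H H).toLinearMap)
        LinearMap.id) ∘ₗ
      (TensorProduct.assoc K H H R).symm.toLinearMap ∘ₗ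
      (TensorProduct.map LinearMap.id ρ) ∘ₗ
      (TensorProduct.map LinearMap.id act) ∘ₗ
      (TensorProduct.assoc K H H R).toLinearMap ∘ₗ
      (TensorProduct.map (TensorProduct.comm K H H).toLinearMap LinearMap.id) ∘ₗ
      (TensorProduct.map Coalgebra.comul LinearMap.id)
  comul_act : (Coalgebra.comul (R := K) (A := R)) ∘ₗ act =
    (TensorProduct.map act act) ∘ₗ
      (TensorProduct.tensorTensorTensorComm K H H R R).toLinearMap ∘ₗ
      (TensorProduct.map Coalgebra.comul Coalgebra.comul)
  counit_act : ∀ (h : H) (z : R), Coalgebra.counit (R := K) (act (h ⊗ₜ[K] z)) =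
    Coalgebra.counit (R := K) h * Coalgebra.counit (R := K) z
  comod_coalg_comul : (TensorProduct.map LinearMap.id Coalgebra.comul) ∘ₗ ρ =
    (TensorProduct.map (LinearMap.mul' K H) LinearMap.id) ∘ₗ
      (TensorProduct.tensorTensorTensorComm K H R H R).toLinearMap ∘ₗ
      (TensorProduct.map ρ ρ) ∘ₗ Coalgebra.comul
  comod_coalg_counit : (TensorProduct.rid K H).toLinearMap ∘ₗ
      (TensorProduct.map LinearMap.id Coalgebra.counit) ∘ₗ ρ =
    (Algebra.linearMap K H) ∘ₗ Coalgebra.counit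
  one_grouplike : Coalgebra.comul (R := K) one = one ⊗ₜ[K] one
  counit_one : Coalgebra.counit (R := K) one = 1
  act_on_one : ∀ h : H, act (h ⊗ₜ[K] one) = Coalgebra.counit (R := K) h • one
  coact_one : ρ one = (1 : H) ⊗ₜ[K] one
  mR_one_left : ∀ r : R, mR (one ⊗ₜ[K] r) = r
  mR_one_right : ∀ r : R, mR (r ⊗ₜ[K] one) = r
  mR_hlinear : mR ∘ₗ actRR act = act ∘ₗ (TensorProduct.map LinearMap.id mR)
  mR_coalg : (Coalgebra.comul (R := K) (A := R)) ∘ₗ mR =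
    (TensorProduct.map mR mR) ∘ₗ comulRR act ρ
  counit_mR : ∀ r s : R, Coalgebra.counit (R := K) (mR (r ⊗ₜ[K] s)) =
    Coalgebra.counit (R := K) r * Coalgebra.counit (R := K) s
  xi_hlinear : ξ ∘ₗ actRR act = adjH ∘ₗ (TensorProduct.map LinearMap.id ξ)
  xi_cocycle : (Coalgebra.comul (R := K) (A := H)) ∘ₗ ξ =
    (TensorProduct.map (LinearMap.mul' K H) ξ) ∘ₗ
      (TensorProduct.assoc K H H (R ⊗[K] R)).symm.toLinearMap ∘ₗ
      (TensorProduct.map ξ (coactRR ρ)) ∘ₗ comulRR act ρ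
  xi_normal : ∀ r s : R, Coalgebra.counit (R := K) (ξ (r ⊗ₜ[K] s)) =
    Coalgebra.counit (R := K) r * Coalgebra.counit (R := K) s
  xi_one_left : ∀ r : R, ξ (one ⊗ₜ[K] r) = Coalgebra.counit (R := K) r • (1 : H)
  xi_one_right : ∀ r : R, ξ (r ⊗ₜ[K] one) = Coalgebra.counit (R := K) r • (1 : H)
  yd6 : (cRH ρ) ∘ₗ (TensorProduct.map mR ξ) ∘ₗ comulRR act ρ =
    (TensorProduct.map (LinearMap.mul' K H) mR) ∘ₗ
      (TensorProduct.assoc K H H (R ⊗[K] R)).symm.toLinearMap ∘ₗ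
      (TensorProduct.map ξ (coactRR ρ)) ∘ₗ comulRR act ρ
  yd7 : mR ∘ₗ (TensorProduct.map LinearMap.id mR) ∘ₗ
      (TensorProduct.assoc K R R R).toLinearMap =
    mR ∘ₗ (TensorProduct.map mR LinearMap.id) ∘ₗ PhiXiR act ρ ξ
  yd8 : (LinearMap.mul' K H) ∘ₗ (TensorProduct.map ξ LinearMap.id) ∘ₗ
      (TensorProduct.assoc K R R H).symm.toLinearMap ∘ₗ
      (TensorProduct.map LinearMap.id ((TensorProduct.map mR ξ) ∘ₗ comulRR act ρ)) =
    (LinearMap.mul' K H) ∘ₗ (TensorProduct.map ξ LinearMap.id) ∘ₗ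
      (TensorProduct.assoc K R R H).symm.toLinearMap ∘ₗ
      (TensorProduct.map LinearMap.id (cHR act)) ∘ₗ
      (TensorProduct.assoc K R H R).toLinearMap ∘ₗ
      (TensorProduct.map ((TensorProduct.map mR ξ) ∘ₗ comulRR act ρ) LinearMap.id) ∘ₗ
      (TensorProduct.assoc K R R R).symm.toLinearMap

end Defs

set_option synthInstance.maxHeartbeats 400000

section Aux

variable {K H R : Type*} [CommRing K] [Ring H] [HopfAlgebra K H]
  [AddCommGroup R] [Module K R] [Coalgebra K R]
variable (P : PreBialgebraWithCocycle K H R)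

lemma braid_one_right (v : R) :
    braidRR P.act P.ρ (v ⊗ₜ[K] P.one) = P.one ⊗ₜ[K] v := by
  have aux : ∀ x : H ⊗[K] R,
      (TensorProduct.map P.act LinearMap.id)
        ((TensorProduct.assoc K H R R).symm
          ((TensorProduct.map LinearMap.id (TensorProduct.comm K R R).toLinearMap)
            ((TensorProduct.assoc K H R R) (x ⊗ₜ[K] P.one)))) =
      P.one ⊗ₜ[K] (TensorProduct.lid K R)
        ((TensorProduct.map Coalgebra.counit LinearMap.id) x) := by
    intro x
    induction x using TensorProduct.induction_on with
    | zero => simp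
    | tmul h r =>
        simp only [TensorProduct.assoc_tmul, TensorProduct.map_tmul,
          TensorProduct.comm_tmul, TensorProduct.assoc_symm_tmul, LinearMap.id_coe,
          id_eq, LinearEquiv.coe_coe, P.act_on_one, TensorProduct.lid_tmul, TensorProduct.smul_tmul]
    | add a b ha hb => simp_all [TensorProduct.add_tmul, TensorProduct.tmul_add]
  have h2 := LinearMap.congr_fun P.coact_counit v
  simp only [LinearMap.coe_comp, Function.comp_apply, LinearEquiv.coe_coe,
    LinearMap.id_coe, id_eq] at h2
  simp only [braidRR, LinearMap.coe_comp, Function.comp_apply, LinearEquiv.coe_coe,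
    TensorProduct.map_tmul, LinearMap.id_coe, id_eq]
  rw [aux (P.ρ v), h2]

lemma braid_one_left (w : R) :
    braidRR P.act P.ρ (P.one ⊗ₜ[K] w) = w ⊗ₜ[K] P.one := by
  simp [braidRR, P.coact_one, P.act_one]

lemma P1 {M : Type*} [AddCommGroup M] [Module K M] (G : (H ⊗[K] H) →ₗ[K] M) (F : H →ₗ[K] M)
    (hG : ∀ a b : H, G (a ⊗ₜ[K] b) = Coalgebra.counit (R := K) b • F a) (h : H) :
    G (Coalgebra.comul h) = F h := by
  have hGe : G = F ∘ₗ (TensorProduct.rid K H).toLinearMap ∘ₗ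
      LinearMap.lTensor H (Coalgebra.counit (R := K) (A := H)) :=
    TensorProduct.ext' fun a b => by
      simp [hG, TensorProduct.rid_tmul]
  rw [hGe]
  simp

lemma P2 {M : Type*} [AddCommGroup M] [Module K M] (G : (H ⊗[K] H) →ₗ[K] M) (F : H →ₗ[K] M)
    (hG : ∀ a b : H, G (a ⊗ₜ[K] b) = Coalgebra.counit (R := K) a • F b) (h : H) :
    G (Coalgebra.comul h) = F h := by
  have hGe : G = F ∘ₗ (TensorProduct.lid K H).toLinearMap ∘ₗ
      LinearMap.rTensor H (Coalgebra.counit (R := K) (A := H)) :=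
    TensorProduct.ext' fun a b => by
      simp [hG, TensorProduct.lid_tmul]
  rw [hGe]
  simp

lemma comulRR_one_right (r : R) :
    comulRR P.act P.ρ (r ⊗ₜ[K] P.one) =
      TensorProduct.map ((TensorProduct.mk K R R).flip P.one)
        ((TensorProduct.mk K R R).flip P.one) (Coalgebra.comul r) := by
  have aux : ∀ c : R ⊗[K] R,
      midMap (braidRR P.act P.ρ) (c ⊗ₜ[K] (P.one ⊗ₜ[K] P.one)) =
        TensorProduct.map ((TensorProduct.mk K R R).flip P.one)
          ((TensorProduct.mk K R R).flip P.one) c := by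
    intro c
    induction c using TensorProduct.induction_on with
    | zero => simp
    | tmul x y =>
        simp only [midMap, LinearMap.coe_comp, Function.comp_apply, LinearEquiv.coe_coe,
          TensorProduct.assoc_tmul, TensorProduct.map_tmul, LinearMap.id_coe, id_eq,
          TensorProduct.assoc_symm_tmul, braid_one_right, LinearMap.flip_apply,
          TensorProduct.mk_apply]
    | add a b ha hb => simp_all [TensorProduct.add_tmul]
  simp only [comulRR, LinearMap.coe_comp, Function.comp_apply, TensorProduct.map_tmul,
    P.one_grouplike]
  exact aux _

lemma comulRR_one_left (s : R) :
    comulRR P.act P.ρ (P.one ⊗ₜ[K] s) =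
      TensorProduct.map (TensorProduct.mk K R R P.one)
        (TensorProduct.mk K R R P.one) (Coalgebra.comul s) := by
  have aux : ∀ c : R ⊗[K] R,
      midMap (braidRR P.act P.ρ) ((P.one ⊗ₜ[K] P.one) ⊗ₜ[K] c) =
        TensorProduct.map (TensorProduct.mk K R R P.one)
          (TensorProduct.mk K R R P.one) c := by
    intro c
    induction c using TensorProduct.induction_on with
    | zero => simp
    | tmul z w =>
        simp only [midMap, LinearMap.coe_comp, Function.comp_apply, LinearEquiv.coe_coe,
          TensorProduct.assoc_tmul, TensorProduct.map_tmul, LinearMap.id_coe, id_eq,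
          TensorProduct.assoc_symm_tmul, braid_one_left, TensorProduct.mk_apply]
    | add a b ha hb => simp_all [TensorProduct.tmul_add]
  simp only [comulRR, LinearMap.coe_comp, Function.comp_apply, TensorProduct.map_tmul,
    P.one_grouplike]
  exact aux _

lemma PhiXiH_one_right (r : R) (h : H) :
    PhiXiH P.act P.ρ P.ξ ((r ⊗ₜ[K] P.one) ⊗ₜ[K] h) = (r ⊗ₜ[K] P.one) ⊗ₜ[K] h := by
  have aux : ∀ c : R ⊗[K] R,
      (TensorProduct.map LinearMap.id (LinearMap.mul' K H))
        ((TensorProduct.map LinearMap.id (TensorProduct.map P.ξ LinearMap.id))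
          ((TensorProduct.assoc K (R ⊗[K] R) (R ⊗[K] R) H)
            ((TensorProduct.map ((TensorProduct.mk K R R).flip P.one)
              ((TensorProduct.mk K R R).flip P.one) c) ⊗ₜ[K] h))) =
      (((TensorProduct.mk K R R).flip P.one)
        ((TensorProduct.rid K R)
          (LinearMap.lTensor R (Coalgebra.counit (R := K) (A := R)) c))) ⊗ₜ[K] h := by
    intro c
    induction c using TensorProduct.induction_on with
    | zero => simp
    | tmul x y =>
        simp only [TensorProduct.map_tmul, LinearMap.flip_apply, TensorProduct.mk_apply,
          TensorProduct.assoc_tmul, LinearMap.id_coe, id_eq, LinearMap.mul'_apply,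
          P.xi_one_right, LinearMap.lTensor_tmul, TensorProduct.rid_tmul, smul_mul_assoc,
          one_mul, TensorProduct.tmul_smul, TensorProduct.smul_tmul']
    | add a b ha hb => simp_all [TensorProduct.add_tmul, TensorProduct.tmul_add]
  simp only [PhiXiH, LinearMap.coe_comp, Function.comp_apply, LinearEquiv.coe_coe,
    TensorProduct.map_tmul, LinearMap.id_coe, id_eq, comulRR_one_right]
  rw [aux (Coalgebra.comul r)]
  simp

lemma PhiXiH_one_left (s : R) (h : H) :
    PhiXiH P.act P.ρ P.ξ ((P.one ⊗ₜ[K] s) ⊗ₜ[K] h) = (P.one ⊗ₜ[K] s) ⊗ₜ[K] h := by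
  have aux : ∀ c : R ⊗[K] R,
      (TensorProduct.map LinearMap.id (LinearMap.mul' K H))
        ((TensorProduct.map LinearMap.id (TensorProduct.map P.ξ LinearMap.id))
          ((TensorProduct.assoc K (R ⊗[K] R) (R ⊗[K] R) H)
            ((TensorProduct.map (TensorProduct.mk K R R P.one)
              (TensorProduct.mk K R R P.one) c) ⊗ₜ[K] h))) =
      ((TensorProduct.mk K R R P.one)
        ((TensorProduct.rid K R)
          (LinearMap.lTensor R (Coalgebra.counit (R := K) (A := R)) c))) ⊗ₜ[K] h := by
    intro c
    induction c using TensorProduct.induction_on with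
    | zero => simp
    | tmul x y =>
        simp only [TensorProduct.map_tmul, TensorProduct.mk_apply,
          TensorProduct.assoc_tmul, LinearMap.id_coe, id_eq, LinearMap.mul'_apply,
          P.xi_one_left, LinearMap.lTensor_tmul, TensorProduct.rid_tmul, smul_mul_assoc,
          one_mul, TensorProduct.tmul_smul, TensorProduct.smul_tmul']
    | add a b ha hb => simp_all [TensorProduct.add_tmul, TensorProduct.tmul_add]
  simp only [PhiXiH, LinearMap.coe_comp, Function.comp_apply, LinearEquiv.coe_coe,
    TensorProduct.map_tmul, LinearMap.id_coe, id_eq, comulRR_one_left]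
  rw [aux (Coalgebra.comul s)]
  simp

lemma cHR_one_right (h : H) :
    cHR P.act (h ⊗ₜ[K] P.one) = P.one ⊗ₜ[K] h := by
  have aux : ∀ c : H ⊗[K] H,
      (TensorProduct.comm K H R)
        ((TensorProduct.map LinearMap.id P.act)
          ((TensorProduct.assoc K H H R)
            ((TensorProduct.comm K H H) c ⊗ₜ[K] P.one))) =
      P.one ⊗ₜ[K] (TensorProduct.lid K H)
        (LinearMap.rTensor H (Coalgebra.counit (R := K) (A := H)) c) := by
    intro c
    induction c using TensorProduct.induction_on with
    | zero => simp
    | tmul a b =>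
        simp only [TensorProduct.map_tmul, LinearEquiv.coe_coe, TensorProduct.comm_tmul,
          LinearMap.id_coe, id_eq, TensorProduct.assoc_tmul, P.act_on_one,
          LinearMap.rTensor_tmul, TensorProduct.lid_tmul, TensorProduct.tmul_smul,
          TensorProduct.smul_tmul']
    | add a b ha hb => simp_all [TensorProduct.add_tmul, TensorProduct.tmul_add]
  simp only [cHR, LinearMap.coe_comp, Function.comp_apply, LinearEquiv.coe_coe,
    TensorProduct.map_tmul, LinearMap.id_coe, id_eq]
  rw [aux (Coalgebra.comul h)]
  simp

lemma cHR_one_left (s : R) :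
    cHR P.act ((1 : H) ⊗ₜ[K] s) = s ⊗ₜ[K] (1 : H) := by
  simp only [cHR, LinearMap.coe_comp, Function.comp_apply, LinearEquiv.coe_coe,
    TensorProduct.map_tmul, LinearMap.id_coe, id_eq, Bialgebra.comul_one,
    Algebra.TensorProduct.one_def, TensorProduct.comm_tmul, TensorProduct.assoc_tmul,
    P.act_one]

lemma mulA_tmul_sigma (r : R) (h h' : H) :
    mulA P.act P.ρ P.mR P.ξ ((r ⊗ₜ[K] h) ⊗ₜ[K] (P.one ⊗ₜ[K] h')) = r ⊗ₜ[K] (h * h') := by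
  simp only [mulA, LinearMap.coe_comp, Function.comp_apply, LinearEquiv.coe_coe,
    TensorProduct.assoc_symm_tmul, TensorProduct.map_tmul, TensorProduct.assoc_tmul,
    LinearMap.id_coe, id_eq, cHR_one_right, PhiXiH_one_right, LinearMap.mul'_apply,
    P.mR_one_right]

lemma mulA_sigma_right (u : R ⊗[K] H) (h' : H) :
    mulA P.act P.ρ P.mR P.ξ (u ⊗ₜ[K] (P.one ⊗ₜ[K] h')) =
      TensorProduct.map LinearMap.id (LinearMap.mulRight K h') u := by
  induction u using TensorProduct.induction_on with
  | zero => simp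
  | tmul r h =>
      rw [mulA_tmul_sigma]
      simp
  | add a b ha hb => simp_all [TensorProduct.add_tmul]

lemma mulA_sigma_one_right (u : R ⊗[K] H) :
    mulA P.act P.ρ P.mR P.ξ (u ⊗ₜ[K] (P.one ⊗ₜ[K] (1 : H))) = u := by
  rw [mulA_sigma_right]
  simp [TensorProduct.map_id]

lemma mulA_sigma_one_left (x : R ⊗[K] H) :
    mulA P.act P.ρ P.mR P.ξ ((P.one ⊗ₜ[K] (1 : H)) ⊗ₜ[K] x) = x := by
  induction x using TensorProduct.induction_on with
  | zero => simp
  | tmul s h' =>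
      simp only [mulA, LinearMap.coe_comp, Function.comp_apply, LinearEquiv.coe_coe,
        TensorProduct.assoc_symm_tmul, TensorProduct.map_tmul, TensorProduct.assoc_tmul,
        LinearMap.id_coe, id_eq, cHR_one_left, PhiXiH_one_left, LinearMap.mul'_apply,
        P.mR_one_left, one_mul]
  | add a b ha hb => simp_all [TensorProduct.tmul_add]

lemma mulA_sigma_left_cHR (h : H) (s : R) :
    mulA P.act P.ρ P.mR P.ξ ((P.one ⊗ₜ[K] h) ⊗ₜ[K] (s ⊗ₜ[K] (1 : H))) =
      cHR P.act (h ⊗ₜ[K] s) := by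
  have aux : ∀ u : R ⊗[K] H,
      (TensorProduct.map P.mR (LinearMap.mul' K H))
        ((TensorProduct.assoc K (R ⊗[K] R) H H)
          ((TensorProduct.map (PhiXiH P.act P.ρ P.ξ) LinearMap.id)
            ((TensorProduct.map (TensorProduct.assoc K R R H).symm.toLinearMap LinearMap.id)
              ((P.one ⊗ₜ[K] u) ⊗ₜ[K] (1 : H))))) = u := by
    intro u
    induction u using TensorProduct.induction_on with
    | zero => simp
    | tmul a g =>
        simp only [TensorProduct.map_tmul, LinearEquiv.coe_coe,
          TensorProduct.assoc_symm_tmul, LinearMap.id_coe, id_eq, PhiXiH_one_left,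
          TensorProduct.assoc_tmul, LinearMap.mul'_apply, P.mR_one_left, mul_one]
    | add a b ha hb => simp_all [TensorProduct.tmul_add, TensorProduct.add_tmul]
  simp only [mulA, LinearMap.coe_comp, Function.comp_apply, LinearEquiv.coe_coe,
    TensorProduct.assoc_symm_tmul, TensorProduct.map_tmul, TensorProduct.assoc_tmul,
    LinearMap.id_coe, id_eq]
  exact aux _

lemma mulA_RR (s t : R) :
    mulA P.act P.ρ P.mR P.ξ ((s ⊗ₜ[K] (1 : H)) ⊗ₜ[K] (t ⊗ₜ[K] (1 : H))) =
      TensorProduct.map P.mR P.ξ (comulRR P.act P.ρ (s ⊗ₜ[K] t)) := by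
  have aux : ∀ c : (R ⊗[K] R) ⊗[K] (R ⊗[K] R),
      (TensorProduct.map P.mR (LinearMap.mul' K H))
        ((TensorProduct.assoc K (R ⊗[K] R) H H)
          (((TensorProduct.map LinearMap.id (LinearMap.mul' K H))
            ((TensorProduct.map LinearMap.id (TensorProduct.map P.ξ LinearMap.id))
              ((TensorProduct.assoc K (R ⊗[K] R) (R ⊗[K] R) H)
                (c ⊗ₜ[K] (1 : H))))) ⊗ₜ[K] (1 : H))) =
      TensorProduct.map P.mR P.ξ c := by
    intro c
    induction c using TensorProduct.induction_on with
    | zero => simp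
    | tmul u v =>
        simp only [TensorProduct.assoc_tmul, TensorProduct.map_tmul, LinearMap.id_coe,
          id_eq, LinearMap.mul'_apply, mul_one, LinearEquiv.coe_coe]
    | add a b ha hb => simp_all [TensorProduct.add_tmul, TensorProduct.tmul_add]
  simp only [mulA, PhiXiH, LinearMap.coe_comp, Function.comp_apply, LinearEquiv.coe_coe,
    TensorProduct.assoc_symm_tmul, TensorProduct.map_tmul, TensorProduct.assoc_tmul,
    LinearMap.id_coe, id_eq, cHR_one_left]
  exact aux _

lemma counit_xi (v : R ⊗[K] R) :
    Coalgebra.counit (R := K) (P.ξ v) =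
      (TensorProduct.lid K K)
        (TensorProduct.map (Coalgebra.counit (R := K)) (Coalgebra.counit (R := K)) v) := by
  induction v using TensorProduct.induction_on with
  | zero => simp
  | tmul r s => simp [P.xi_normal, smul_eq_mul]
  | add a b ha hb => simp_all

lemma braid_counit (v w : R) :
    (TensorProduct.rid K R)
      (TensorProduct.map LinearMap.id (Coalgebra.counit (R := K))
        (braidRR P.act P.ρ (v ⊗ₜ[K] w))) =
    Coalgebra.counit (R := K) v • w := by
  have aux : ∀ x : H ⊗[K] R,
      (TensorProduct.rid K R) (TensorProduct.map LinearMap.id (Coalgebra.counit (R := K))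
        ((TensorProduct.map P.act LinearMap.id)
          ((TensorProduct.assoc K H R R).symm
            ((TensorProduct.map LinearMap.id (TensorProduct.comm K R R).toLinearMap)
              ((TensorProduct.assoc K H R R) (x ⊗ₜ[K] w)))))) =
      P.act (((TensorProduct.rid K H)
        (TensorProduct.map LinearMap.id (Coalgebra.counit (R := K)) x)) ⊗ₜ[K] w) := by
    intro x
    induction x using TensorProduct.induction_on with
    | zero => simp
    | tmul g u =>
        simp only [TensorProduct.assoc_tmul, TensorProduct.map_tmul, LinearEquiv.coe_coe,
          TensorProduct.comm_tmul, TensorProduct.assoc_symm_tmul, LinearMap.id_coe, id_eq,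
          TensorProduct.rid_tmul, map_smul]
        rw [← TensorProduct.smul_tmul', map_smul]
    | add a b ha hb => simp_all [TensorProduct.add_tmul]
  have h2 := LinearMap.congr_fun P.comod_coalg_counit v
  simp only [LinearMap.coe_comp, Function.comp_apply, LinearEquiv.coe_coe,
    Algebra.linearMap_apply] at h2
  simp only [braidRR, LinearMap.coe_comp, Function.comp_apply, LinearEquiv.coe_coe,
    TensorProduct.map_tmul, LinearMap.id_coe, id_eq]
  rw [aux (P.ρ v), h2, Algebra.algebraMap_eq_smul_one, ← TensorProduct.smul_tmul',
    map_smul, P.act_one]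

lemma ridc_comul (s : R) :
    (TensorProduct.rid K R)
      (TensorProduct.map LinearMap.id (Coalgebra.counit (R := K)) (Coalgebra.comul s)) = s := by
  have e : (TensorProduct.map LinearMap.id (Coalgebra.counit (R := K)) :
      (R ⊗[K] R) →ₗ[K] R ⊗[K] K) = (Coalgebra.counit (R := K) (A := R)).lTensor R :=
    TensorProduct.ext' fun a b => by simp
  rw [e, Coalgebra.lTensor_counit_comul]
  simp

lemma EE_midMap (c d : R ⊗[K] R) :
    (TensorProduct.rid K (R ⊗[K] R))
      (TensorProduct.map LinearMap.id
        ((TensorProduct.lid K K).toLinearMap ∘ₗ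
          TensorProduct.map (Coalgebra.counit (R := K)) (Coalgebra.counit (R := K)))
        (midMap (braidRR P.act P.ρ) (c ⊗ₜ[K] d))) =
    ((TensorProduct.rid K R)
      (TensorProduct.map LinearMap.id (Coalgebra.counit (R := K)) c)) ⊗ₜ[K]
    ((TensorProduct.rid K R)
      (TensorProduct.map LinearMap.id (Coalgebra.counit (R := K)) d)) := by
  induction c using TensorProduct.induction_on with
  | zero => simp
  | add a b ha hb => simp_all [TensorProduct.add_tmul]
  | tmul x y =>
    induction d using TensorProduct.induction_on with
    | zero => simp
    | add a b ha hb => simp_all [TensorProduct.tmul_add]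
    | tmul z w =>
      have aux : ∀ u : R ⊗[K] R,
          (TensorProduct.rid K (R ⊗[K] R))
            (TensorProduct.map LinearMap.id
              ((TensorProduct.lid K K).toLinearMap ∘ₗ
                TensorProduct.map (Coalgebra.counit (R := K)) (Coalgebra.counit (R := K)))
              ((TensorProduct.assoc K R R (R ⊗[K] R)).symm
                (x ⊗ₜ[K] ((TensorProduct.assoc K R R R) (u ⊗ₜ[K] w))))) =
          Coalgebra.counit (R := K) w •
            (x ⊗ₜ[K] ((TensorProduct.rid K R)
              (TensorProduct.map LinearMap.id (Coalgebra.counit (R := K)) u))) := by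
        intro u
        induction u using TensorProduct.induction_on with
        | zero => simp
        | tmul a b =>
            simp only [TensorProduct.assoc_tmul, TensorProduct.assoc_symm_tmul,
              TensorProduct.map_tmul, LinearMap.id_coe, id_eq, LinearMap.coe_comp,
              Function.comp_apply, LinearEquiv.coe_coe, TensorProduct.lid_tmul,
              TensorProduct.rid_tmul, smul_eq_mul, TensorProduct.tmul_smul, smul_smul]
            rw [mul_comm]
        | add a b ha hb =>
            simp_all [TensorProduct.add_tmul, TensorProduct.tmul_add, smul_add]
      simp only [midMap, LinearMap.coe_comp, Function.comp_apply, LinearEquiv.coe_coe,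
        TensorProduct.assoc_tmul, TensorProduct.map_tmul, LinearMap.id_coe, id_eq,
        TensorProduct.assoc_symm_tmul]
      rw [aux (braidRR P.act P.ρ (y ⊗ₜ[K] z)), braid_counit]
      simp only [TensorProduct.map_tmul, LinearMap.id_coe, id_eq, TensorProduct.rid_tmul,
        TensorProduct.tmul_smul, TensorProduct.smul_tmul', smul_smul]

lemma EE_comulRR (s t : R) :
    (TensorProduct.rid K (R ⊗[K] R))
      (TensorProduct.map LinearMap.id
        ((TensorProduct.lid K K).toLinearMap ∘ₗ
          TensorProduct.map (Coalgebra.counit (R := K)) (Coalgebra.counit (R := K)))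
        (comulRR P.act P.ρ (s ⊗ₜ[K] t))) = s ⊗ₜ[K] t := by
  simp only [comulRR, LinearMap.coe_comp, Function.comp_apply, TensorProduct.map_tmul]
  rw [EE_midMap, ridc_comul, ridc_comul]

lemma phi_cHR (φ : ((R ⊗[K] H) ⊗[K] (R ⊗[K] H)) →ₗ[K] K)
    (RI : ∀ (y : R ⊗[K] H) (a : R) (g : H),
      φ (y ⊗ₜ[K] (a ⊗ₜ[K] g)) =
        Coalgebra.counit (R := K) g • φ (y ⊗ₜ[K] (a ⊗ₜ[K] (1 : H))))
    (y : R ⊗[K] H) (h : H) (s : R) :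
    φ (y ⊗ₜ[K] cHR P.act (h ⊗ₜ[K] s)) =
      φ (y ⊗ₜ[K] (P.act (h ⊗ₜ[K] s) ⊗ₜ[K] (1 : H))) := by
  set G : (H ⊗[K] H) →ₗ[K] K :=
    φ ∘ₗ (TensorProduct.mk K (R ⊗[K] H) (R ⊗[K] H) y) ∘ₗ
      (TensorProduct.comm K H R).toLinearMap ∘ₗ
      (TensorProduct.map LinearMap.id P.act) ∘ₗ
      (TensorProduct.assoc K H H R).toLinearMap ∘ₗ
      ((TensorProduct.mk K (H ⊗[K] H) R).flip s) ∘ₗ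
      (TensorProduct.comm K H H).toLinearMap with hG
  set F : H →ₗ[K] K :=
    φ ∘ₗ (TensorProduct.mk K (R ⊗[K] H) (R ⊗[K] H) y) ∘ₗ
      ((TensorProduct.mk K R H).flip (1 : H)) ∘ₗ P.act ∘ₗ
      ((TensorProduct.mk K H R).flip s) with hF
  have key := P1 G F (fun a b => by
    simp only [hG, hF, LinearMap.coe_comp, Function.comp_apply, LinearEquiv.coe_coe,
      TensorProduct.comm_tmul, LinearMap.flip_apply, TensorProduct.mk_apply,
      TensorProduct.assoc_tmul, TensorProduct.map_tmul, LinearMap.id_coe, id_eq]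
    exact RI y (P.act (a ⊗ₜ[K] s)) b) h
  simp only [hG, hF, LinearMap.coe_comp, Function.comp_apply, LinearEquiv.coe_coe,
    LinearMap.flip_apply, TensorProduct.mk_apply] at key
  simp only [cHR, LinearMap.coe_comp, Function.comp_apply, LinearEquiv.coe_coe,
    TensorProduct.map_tmul, LinearMap.id_coe, id_eq]
  exact key

lemma T_comul (r : R) (h : H) :
    (TensorProduct.map (P.act ∘ₗ ((TensorProduct.mk K H R).flip r))
        ((LinearMap.mul' K H) ∘ₗ LinearMap.lTensor H (HopfAlgebra.antipode (R := K) (A := H))))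
      ((TensorProduct.assoc K H H H)
        ((LinearMap.rTensor H (Coalgebra.comul (R := K) (A := H)))
          (Coalgebra.comul (R := K) h))) =
    P.act (h ⊗ₜ[K] r) ⊗ₜ[K] (1 : H) := by
  have e := Coalgebra.coassoc_apply (R := K) (A := H) h
  have key := P1 ((TensorProduct.map (P.act ∘ₗ ((TensorProduct.mk K H R).flip r))
        ((LinearMap.mul' K H) ∘ₗ LinearMap.lTensor H (HopfAlgebra.antipode (R := K)))) ∘ₗ
      LinearMap.lTensor H (Coalgebra.comul (R := K) (A := H)))
    (((TensorProduct.mk K R H).flip (1 : H)) ∘ₗ P.act ∘ₗ ((TensorProduct.mk K H R).flip r))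
    (fun a b => by
      simp only [LinearMap.coe_comp, Function.comp_apply, LinearMap.lTensor_tmul,
        TensorProduct.map_tmul, LinearMap.flip_apply, TensorProduct.mk_apply,
        HopfAlgebra.mul_antipode_lTensor_comul_apply, Algebra.algebraMap_eq_smul_one,
        TensorProduct.tmul_smul]) h
  simp only [LinearMap.coe_comp, Function.comp_apply, LinearMap.flip_apply,
    TensorProduct.mk_apply] at key
  rw [e]
  exact key

lemma T_tmul (r : R) (g g' : H) :
    (TensorProduct.map (P.act ∘ₗ ((TensorProduct.mk K H R).flip r))
        ((LinearMap.mul' K H) ∘ₗ LinearMap.lTensor H (HopfAlgebra.antipode (R := K) (A := H))))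
      ((TensorProduct.assoc K H H H)
        ((LinearMap.rTensor H (Coalgebra.comul (R := K) (A := H))) (g ⊗ₜ[K] g'))) =
    mulA P.act P.ρ P.mR P.ξ
      (mulA P.act P.ρ P.mR P.ξ ((P.one ⊗ₜ[K] g) ⊗ₜ[K] (r ⊗ₜ[K] (1 : H))) ⊗ₜ[K]
        (P.one ⊗ₜ[K] (HopfAlgebra.antipode (R := K) g'))) := by
  rw [mulA_sigma_left_cHR, mulA_sigma_right]
  simp only [cHR, LinearMap.coe_comp, Function.comp_apply, LinearEquiv.coe_coe,
    TensorProduct.map_tmul, LinearMap.id_coe, id_eq, LinearMap.rTensor_tmul]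
  have aux : ∀ c : H ⊗[K] H,
      (TensorProduct.map (P.act ∘ₗ ((TensorProduct.mk K H R).flip r))
        ((LinearMap.mul' K H) ∘ₗ LinearMap.lTensor H (HopfAlgebra.antipode (R := K))))
        ((TensorProduct.assoc K H H H) (c ⊗ₜ[K] g')) =
      (TensorProduct.map LinearMap.id
          (LinearMap.mulRight K (HopfAlgebra.antipode (R := K) g')))
        ((TensorProduct.comm K H R)
          ((TensorProduct.map LinearMap.id P.act)
            ((TensorProduct.assoc K H H R) ((TensorProduct.comm K H H) c ⊗ₜ[K] r)))) := by
    intro c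
    induction c using TensorProduct.induction_on with
    | zero => simp
    | tmul a b =>
        simp only [TensorProduct.assoc_tmul, TensorProduct.map_tmul, LinearMap.coe_comp,
          Function.comp_apply, LinearMap.flip_apply, TensorProduct.mk_apply,
          LinearMap.lTensor_tmul, LinearMap.mul'_apply, LinearEquiv.coe_coe,
          TensorProduct.comm_tmul, LinearMap.id_coe, id_eq, LinearMap.mulRight_apply]
    | add a b ha hb => simp_all [TensorProduct.add_tmul]
  exact aux _

end Aux

/-- Let `(R, ξ)` be a pre-bialgebra with cocycle in `{}^H_H 𝒴𝒟`,
`A = R #_ξ H` the associated bialgebra, `σ(h) = 1_R # h`, and let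
`φ : A ⊗ A → K` be `H`-bilinear and `H`-balanced.  Then for all `r, s, t ∈ R`,
`h ∈ H`: (a) `φ(r#1 ⊗ (s#1)(t#1)) = φ(r#1 ⊗ st#1)`;
(b) `φ(r#h ⊗ s#1) = φ(r#1 ⊗ (h·s)#1)`;
(c) `φ((h·r)#1 ⊗ s#1) = φ(r#1 ⊗ (S(h)·s)#1)`. -/
theorem hbilinear_balanced_smash {K H R : Type*} [CommRing K] [Ring H]
    [HopfAlgebra K H] [AddCommGroup R] [Module K R] [Coalgebra K R]
    (P : PreBialgebraWithCocycle K H R)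
    (φ : ((R ⊗[K] H) ⊗[K] (R ⊗[K] H)) →ₗ[K] K)
    (hbil : ∀ (h h' : H) (x y : R ⊗[K] H),
      φ ((mulA P.act P.ρ P.mR P.ξ (sigmaA P.one h ⊗ₜ[K] x)) ⊗ₜ[K]
          (mulA P.act P.ρ P.mR P.ξ (y ⊗ₜ[K] sigmaA P.one h'))) =
        Coalgebra.counit (R := K) h * φ (x ⊗ₜ[K] y) * Coalgebra.counit (R := K) h')
    (hbal : ∀ (h : H) (x y : R ⊗[K] H),
      φ ((mulA P.act P.ρ P.mR P.ξ (x ⊗ₜ[K] sigmaA P.one h)) ⊗ₜ[K] y) =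
        φ (x ⊗ₜ[K] mulA P.act P.ρ P.mR P.ξ (sigmaA P.one h ⊗ₜ[K] y))) :
    (∀ r s t : R,
      φ ((r ⊗ₜ[K] (1 : H)) ⊗ₜ[K]
          mulA P.act P.ρ P.mR P.ξ ((s ⊗ₜ[K] (1 : H)) ⊗ₜ[K] (t ⊗ₜ[K] (1 : H)))) =
        φ ((r ⊗ₜ[K] (1 : H)) ⊗ₜ[K] (P.mR (s ⊗ₜ[K] t) ⊗ₜ[K] (1 : H)))) ∧
    (∀ (r s : R) (h : H),
      φ ((r ⊗ₜ[K] h) ⊗ₜ[K] (s ⊗ₜ[K] (1 : H))) =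
        φ ((r ⊗ₜ[K] (1 : H)) ⊗ₜ[K] (P.act (h ⊗ₜ[K] s) ⊗ₜ[K] (1 : H)))) ∧
    (∀ (r s : R) (h : H),
      φ ((P.act (h ⊗ₜ[K] r) ⊗ₜ[K] (1 : H)) ⊗ₜ[K] (s ⊗ₜ[K] (1 : H))) =
        φ ((r ⊗ₜ[K] (1 : H)) ⊗ₜ[K]
          (P.act ((HopfAlgebra.antipode (R := K) h) ⊗ₜ[K] s) ⊗ₜ[K] (1 : H)))) := by
  have hσ : ∀ g : H, sigmaA P.one g = P.one ⊗ₜ[K] g := fun g => rfl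
  have RI : ∀ (y : R ⊗[K] H) (a : R) (g : H),
      φ (y ⊗ₜ[K] (a ⊗ₜ[K] g)) =
        Coalgebra.counit (R := K) g • φ (y ⊗ₜ[K] (a ⊗ₜ[K] (1 : H))) := by
    intro y a g
    have hb1 := hbil 1 g y (a ⊗ₜ[K] (1 : H))
    simp only [hσ] at hb1
    rw [mulA_sigma_one_left, mulA_tmul_sigma, one_mul] at hb1
    rw [hb1, Bialgebra.counit_one, one_mul, smul_eq_mul, mul_comm]
  have LI : ∀ (g : H) (x y : R ⊗[K] H),
      φ (mulA P.act P.ρ P.mR P.ξ ((P.one ⊗ₜ[K] g) ⊗ₜ[K] x) ⊗ₜ[K] y) =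
        Coalgebra.counit (R := K) g • φ (x ⊗ₜ[K] y) := by
    intro g x y
    have hb2 := hbil g 1 x y
    simp only [hσ] at hb2
    rw [mulA_sigma_one_right] at hb2
    rw [hb2, Bialgebra.counit_one, mul_one, smul_eq_mul]
  refine ⟨?_, ?_, ?_⟩
  · -- part (a)
    intro r s t
    rw [mulA_RR]
    have Ca : ∀ c : (R ⊗[K] R) ⊗[K] (R ⊗[K] R),
        φ ((r ⊗ₜ[K] (1 : H)) ⊗ₜ[K] TensorProduct.map P.mR P.ξ c) =
          φ ((r ⊗ₜ[K] (1 : H)) ⊗ₜ[K]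
            (P.mR ((TensorProduct.rid K (R ⊗[K] R))
              (TensorProduct.map LinearMap.id
                ((TensorProduct.lid K K).toLinearMap ∘ₗ
                  TensorProduct.map (Coalgebra.counit (R := K)) (Coalgebra.counit (R := K)))
                c)) ⊗ₜ[K] (1 : H))) := by
      intro c
      induction c using TensorProduct.induction_on with
      | zero => simp
      | tmul u v =>
          rw [TensorProduct.map_tmul, RI, counit_xi P v, TensorProduct.map_tmul]
          simp only [LinearMap.coe_comp, Function.comp_apply, LinearMap.id_coe, id_eq,
            TensorProduct.rid_tmul, map_smul, TensorProduct.smul_tmul',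
            TensorProduct.tmul_smul]
          rw [← TensorProduct.smul_tmul', TensorProduct.tmul_smul, map_smul]
          simp only [LinearEquiv.coe_coe]
      | add a b ha hb =>
          simp only [map_add, TensorProduct.tmul_add, TensorProduct.add_tmul, ha, hb]
    rw [Ca, EE_comulRR]
  · -- part (b)
    intro r s h
    have e1 : (r ⊗ₜ[K] h : R ⊗[K] H) =
        mulA P.act P.ρ P.mR P.ξ ((r ⊗ₜ[K] (1 : H)) ⊗ₜ[K] (P.one ⊗ₜ[K] h)) := by
      rw [mulA_tmul_sigma, one_mul]
    rw [e1, ← hσ h, hbal h (r ⊗ₜ[K] (1 : H)) (s ⊗ₜ[K] (1 : H)), hσ, mulA_sigma_left_cHR,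
      phi_cHR P φ RI]
  · -- part (c)
    intro r s h
    have key := P2
      ((φ ∘ₗ ((TensorProduct.mk K (R ⊗[K] H) (R ⊗[K] H)).flip (s ⊗ₜ[K] (1 : H)))) ∘ₗ
        (TensorProduct.map (P.act ∘ₗ ((TensorProduct.mk K H R).flip r))
          ((LinearMap.mul' K H) ∘ₗ
            LinearMap.lTensor H (HopfAlgebra.antipode (R := K) (A := H)))) ∘ₗ
        (TensorProduct.assoc K H H H).toLinearMap ∘ₗ
        (LinearMap.rTensor H (Coalgebra.comul (R := K) (A := H))))
      (φ ∘ₗ (TensorProduct.mk K (R ⊗[K] H) (R ⊗[K] H) (r ⊗ₜ[K] (1 : H))) ∘ₗ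
        (mulA P.act P.ρ P.mR P.ξ) ∘ₗ
        ((TensorProduct.mk K (R ⊗[K] H) (R ⊗[K] H)).flip (s ⊗ₜ[K] (1 : H))) ∘ₗ
        (TensorProduct.mk K R H P.one) ∘ₗ (HopfAlgebra.antipode (R := K) (A := H)))
      (fun a b => by
        simp only [LinearMap.coe_comp, Function.comp_apply, LinearMap.flip_apply,
          TensorProduct.mk_apply, LinearEquiv.coe_coe]
        rw [T_tmul P r a b, ← hσ (HopfAlgebra.antipode (R := K) b), hbal, hσ, LI]) h
    simp only [LinearMap.coe_comp, Function.comp_apply, LinearMap.flip_apply,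
      TensorProduct.mk_apply, LinearEquiv.coe_coe] at key
    rw [T_comul P r h] at key
    rw [mulA_sigma_left_cHR, phi_cHR P φ RI] at key
    exact key
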